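/- Let x > 0, b > 0, c > 0 and Δ ∈ ℕ. Then there exists β > 0 such that the following holds for every finite graph G = (V,E) of maximum degree at most Δ which is a vertex b-expander, and every p ∈ [x, 1−x]: (1/|E|) · ∑_{e∈E} P_p({F ⊆ E : e is an L-bridge for F}) ≤ β/√|V|. -/

import Mathlib

open Filter Topology
open scoped Classical

noncomputable section

variable {V : Type*}

/-- Probability that the random subgraph `G(p)` lies in the event `A`. -/
noncomputable def percProb [Fintype V] [DecidableEq V] (G : SimpleGraph V) [DecidableRel G.Adj]
    (p : ℝ) (A : Set (Finset (Sym2 V))) : ℝ :=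
  ∑ F ∈ G.edgeFinset.powerset,
    if F ∈ A then p ^ F.card * (1 - p) ^ (G.edgeFinset.card - F.card) else 0

/-- Number of vertices in the component of `v` in the spanning subgraph with edge set `F`. -/
noncomputable def compCard [Fintype V] (F : Finset (Sym2 V)) (v : V) : ℕ :=
  Set.ncard {w | (SimpleGraph.fromEdgeSet (↑F : Set (Sym2 V))).Reachable v w}

/-- The ball of radius `r` around `w`. -/
def ball (G : SimpleGraph V) (w : V) (r : ℕ) : Set V :=
  {v | ∃ q : G.Walk w v, q.length ≤ r}

/-- The ball of radius `r` around a set `A`. -/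
def setBall (G : SimpleGraph V) (A : Set V) (r : ℕ) : Set V :=
  {v | ∃ u ∈ A, ∃ q : G.Walk u v, q.length ≤ r}

/-- `G` is a vertex `b`-expander. -/
def VertexExpander [Fintype V] (G : SimpleGraph V) (b : ℝ) : Prop :=
  ∀ A : Finset V, 0 < A.card → (A.card : ℝ) ≤ Fintype.card V / 2 →
    b * A.card ≤ (Set.ncard {v | v ∉ A ∧ ∃ u ∈ A, G.Adj u v} : ℝ)

/-- The set of edges of `G` with exactly one endpoint in `A`. -/
def edgeBoundary (G : SimpleGraph V) (A : Set V) : Set (Sym2 V) :=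
  {e | e ∈ G.edgeSet ∧ ∃ u v : V, e = s(u, v) ∧ u ∈ A ∧ v ∉ A}

/-- `G` is an edge `b`-expander. -/
def EdgeExpander [Fintype V] (G : SimpleGraph V) (b : ℝ) : Prop :=
  ∀ A : Finset V, 0 < A.card → (A.card : ℝ) ≤ Fintype.card V / 2 →
    b * A.card ≤ ((edgeBoundary G ↑A).ncard : ℝ)

/-- `e` is an `L`-bridge for configuration `F` (largeness threshold `c * |V|`). -/
def IsLBridge [Fintype V] (G : SimpleGraph V) (c : ℝ) (F : Finset (Sym2 V)) (e : Sym2 V) : Prop :=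
  e ∈ G.edgeSet ∧ ∃ u v : V, e = s(u, v) ∧
    ¬ (SimpleGraph.fromEdgeSet (↑(F.erase e) : Set (Sym2 V))).Reachable u v ∧
    c * Fintype.card V ≤ (compCard (F.erase e) u : ℝ) ∧
    c * Fintype.card V ≤ (compCard (F.erase e) v : ℝ)

/-- `F` has more than one component with at least `s` vertices. -/
def TwoLargeComponents [Fintype V] (F : Finset (Sym2 V)) (s : ℝ) : Prop :=
  ∃ v w : V, ¬ (SimpleGraph.fromEdgeSet (↑F : Set (Sym2 V))).Reachable v w ∧
    s ≤ (compCard F v : ℝ) ∧ s ≤ (compCard F w : ℝ)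

/-- The edge-isoperimetric number (Cheeger constant) of `G`. -/
noncomputable def isoNumber [Fintype V] (G : SimpleGraph V) : ℝ :=
  sInf {x : ℝ | ∃ A : Finset V, 0 < A.card ∧ (A.card : ℝ) ≤ Fintype.card V / 2 ∧
    x = ((edgeBoundary G ↑A).ncard : ℝ) / A.card}




set_option maxHeartbeats 2000000
set_option linter.unusedSectionVars false
set_option linter.unusedVariables false

section AuxGraph
variable [Fintype V] [DecidableEq V]

variable [Fintype V] [DecidableEq V]

lemma reach_mono {F F' : Finset (Sym2 V)} (h : F ⊆ F') {u w : V}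
    (hr : (SimpleGraph.fromEdgeSet (↑F : Set (Sym2 V))).Reachable u w) :
    (SimpleGraph.fromEdgeSet (↑F' : Set (Sym2 V))).Reachable u w :=
  hr.mono (SimpleGraph.fromEdgeSet_mono (by exact_mod_cast h))

lemma compCard_mono {F F' : Finset (Sym2 V)} (h : F ⊆ F') (v : V) :
    compCard F v ≤ compCard F' v :=
  Set.ncard_le_ncard (fun w hw => reach_mono h hw) (Set.toFinite _)

lemma compCard_le_card (F : Finset (Sym2 V)) (v : V) :
    compCard F v ≤ Fintype.card V := by
  simpa [compCard, Set.ncard_univ] using Set.ncard_le_ncard (Set.subset_univ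
    {w | (SimpleGraph.fromEdgeSet (↑F : Set (Sym2 V))).Reachable v w}) (Set.toFinite _)

lemma compCard_eq_filter (F : Finset (Sym2 V)) (v : V) :
    compCard F v =
      (Finset.univ.filter
        (fun w => (SimpleGraph.fromEdgeSet (↑F : Set (Sym2 V))).Reachable v w)).card := by
  rw [compCard, ← Set.ncard_coe_finset]
  congr 1
  ext w
  simp

/-- the potential function: sum of component sizes over all vertices -/
noncomputable def gFun [Fintype V] (F : Finset (Sym2 V)) : ℕ := ∑ v : V, compCard F v

lemma gFun_mono {F F' : Finset (Sym2 V)} (h : F ⊆ F') : gFun F ≤ gFun F' :=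
  Finset.sum_le_sum fun v _ => compCard_mono h v

lemma gFun_le (F : Finset (Sym2 V)) : gFun F ≤ Fintype.card V * Fintype.card V := by
  calc gFun F ≤ ∑ _v : V, Fintype.card V := Finset.sum_le_sum fun v _ => compCard_le_card F v
  _ = Fintype.card V * Fintype.card V := by simp [mul_comm]

lemma reach_set_eq {F : Finset (Sym2 V)} {u w : V}
    (h : (SimpleGraph.fromEdgeSet (↑F : Set (Sym2 V))).Reachable u w) :
    {t | (SimpleGraph.fromEdgeSet (↑F : Set (Sym2 V))).Reachable w t} =
    {t | (SimpleGraph.fromEdgeSet (↑F : Set (Sym2 V))).Reachable u t} := by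
  ext t
  exact ⟨fun ht => h.trans ht, fun ht => h.symm.trans ht⟩

lemma gFun_insert (F : Finset (Sym2 V)) (u v : V)
    (hnr : ¬ (SimpleGraph.fromEdgeSet (↑F : Set (Sym2 V))).Reachable u v) :
    gFun F + compCard F u * compCard F v * 2 ≤ gFun (insert s(u,v) F) := by
  have hne : u ≠ v := fun h => hnr (h ▸ SimpleGraph.Reachable.refl u)
  set F' : Finset (Sym2 V) := insert s(u,v) F with hF'
  have hsub : F ⊆ F' := Finset.subset_insert _ _
  -- adjacency of u v in the new graph
  have hadj : (SimpleGraph.fromEdgeSet (↑F' : Set (Sym2 V))).Adj u v := by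
    rw [SimpleGraph.fromEdgeSet_adj]
    exact ⟨by simp [hF'], hne⟩
  set Su := Finset.univ.filter
      (fun w => (SimpleGraph.fromEdgeSet (↑F : Set (Sym2 V))).Reachable u w) with hSu
  set Sv := Finset.univ.filter
      (fun w => (SimpleGraph.fromEdgeSet (↑F : Set (Sym2 V))).Reachable v w) with hSv
  have hSucard : Su.card = compCard F u := (compCard_eq_filter F u).symm
  have hSvcard : Sv.card = compCard F v := (compCard_eq_filter F v).symm
  have hdisj : Disjoint Su Sv := by
    rw [Finset.disjoint_left]
    intro w hwu hwv
    rw [hSu, Finset.mem_filter] at hwu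
    rw [hSv, Finset.mem_filter] at hwv
    exact hnr (hwu.2.trans hwv.2.symm)
  -- pointwise bound
  have hpoint : ∀ w : V, compCard F w +
      ((if w ∈ Su then compCard F v else 0) + (if w ∈ Sv then compCard F u else 0))
      ≤ compCard F' w := by
    intro w
    by_cases hwu : w ∈ Su
    · have hwv : w ∉ Sv := Finset.disjoint_left.mp hdisj hwu
      simp only [hwu, hwv, if_true, if_false, add_zero]
      rw [hSu, Finset.mem_filter] at hwu
      -- component of w in F equals component of u in F
      have h1 : compCard F w = compCard F u := by
        unfold compCard; rw [reach_set_eq hwu.2]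
      rw [h1]
      -- in F', w reaches everything in Su ∪ Sv
      have h2 : (↑(Su ∪ Sv) : Set V) ⊆
          {t | (SimpleGraph.fromEdgeSet (↑F' : Set (Sym2 V))).Reachable w t} := by
        intro t ht
        simp only [Finset.coe_union, Set.mem_union, Finset.mem_coe] at ht
        have hwu' : (SimpleGraph.fromEdgeSet (↑F' : Set (Sym2 V))).Reachable w u :=
          (reach_mono hsub hwu.2).symm
        rcases ht with ht | ht
        · rw [hSu, Finset.mem_filter] at ht
          exact hwu'.trans (reach_mono hsub ht.2)
        · rw [hSv, Finset.mem_filter] at ht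
          exact (hwu'.trans hadj.reachable).trans (reach_mono hsub ht.2)
      have h3 : (Su ∪ Sv).card ≤ compCard F' w := by
        rw [← Set.ncard_coe_finset]
        exact Set.ncard_le_ncard h2 (Set.toFinite _)
      rw [Finset.card_union_of_disjoint hdisj, hSucard, hSvcard] at h3
      omega
    · by_cases hwv : w ∈ Sv
      · simp only [hwu, hwv, if_true, if_false, zero_add]
        rw [hSv, Finset.mem_filter] at hwv
        have h1 : compCard F w = compCard F v := by
          unfold compCard; rw [reach_set_eq hwv.2]
        rw [h1]
        have h2 : (↑(Su ∪ Sv) : Set V) ⊆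
            {t | (SimpleGraph.fromEdgeSet (↑F' : Set (Sym2 V))).Reachable w t} := by
          intro t ht
          simp only [Finset.coe_union, Set.mem_union, Finset.mem_coe] at ht
          have hwv' : (SimpleGraph.fromEdgeSet (↑F' : Set (Sym2 V))).Reachable w v :=
            (reach_mono hsub hwv.2).symm
          rcases ht with ht | ht
          · rw [hSu, Finset.mem_filter] at ht
            exact (hwv'.trans hadj.symm.reachable).trans (reach_mono hsub ht.2)
          · rw [hSv, Finset.mem_filter] at ht
            exact hwv'.trans (reach_mono hsub ht.2)
        have h3 : (Su ∪ Sv).card ≤ compCard F' w := by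
          rw [← Set.ncard_coe_finset]
          exact Set.ncard_le_ncard h2 (Set.toFinite _)
        rw [Finset.card_union_of_disjoint hdisj, hSucard, hSvcard] at h3
        omega
      · simp only [hwu, hwv, if_false, add_zero]
        exact compCard_mono hsub w
  have := Finset.sum_le_sum (fun w (_ : w ∈ Finset.univ) => hpoint w)
  rw [Finset.sum_add_distrib, Finset.sum_add_distrib] at this
  rw [Finset.sum_ite_mem, Finset.sum_ite_mem, Finset.univ_inter, Finset.univ_inter,
    Finset.sum_const, Finset.sum_const, smul_eq_mul, smul_eq_mul, hSucard, hSvcard] at this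
  calc gFun F + compCard F u * compCard F v * 2
      = (∑ v_1 : V, compCard F v_1) + (compCard F u * compCard F v + compCard F v * compCard F u) := by
        rw [gFun]; ring
    _ ≤ gFun F' := this


end AuxGraph


lemma pair_sum {α : Type*} [DecidableEq α] (s : Finset α) (f : Finset α → ℝ) :
    ∑ H ∈ s.powerset, ∑ e ∈ s \ H, f (insert e H)
      = ∑ H ∈ s.powerset, (H.card : ℝ) * f H := by
  have RHS : ∀ H ∈ s.powerset, (H.card : ℝ) * f H = ∑ _e ∈ H, f H := by
    intro H _; rw [Finset.sum_const, nsmul_eq_mul]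
  rw [Finset.sum_congr rfl RHS, Finset.sum_sigma', Finset.sum_sigma']
  refine Finset.sum_nbij' (i := fun x => ⟨insert x.2 x.1, x.2⟩)
    (j := fun x => ⟨x.1.erase x.2, x.2⟩) ?_ ?_ ?_ ?_ ?_
  · rintro ⟨H, e⟩ hx
    simp only [Finset.mem_sigma, Finset.mem_powerset, Finset.mem_sdiff] at hx ⊢
    exact ⟨Finset.insert_subset hx.2.1 hx.1, Finset.mem_insert_self _ _⟩
  · rintro ⟨H, e⟩ hx
    simp only [Finset.mem_sigma, Finset.mem_powerset, Finset.mem_sdiff] at hx ⊢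
    exact ⟨(Finset.erase_subset _ _).trans hx.1,
      hx.1 hx.2, Finset.notMem_erase _ _⟩
  · rintro ⟨H, e⟩ hx
    simp only [Finset.mem_sigma, Finset.mem_powerset, Finset.mem_sdiff] at hx
    simp [Finset.erase_insert hx.2.2]
  · rintro ⟨H, e⟩ hx
    simp only [Finset.mem_sigma, Finset.mem_powerset, Finset.mem_sdiff] at hx
    simp [Finset.insert_erase hx.2]
  · rintro ⟨H, e⟩ hx
    simp only [Finset.mem_sigma, Finset.mem_powerset, Finset.mem_sdiff] at hx
    simp [Finset.erase_insert hx.2.2]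


lemma binom_sum_one {p : ℝ} (m : ℕ) :
    ∑ j ∈ Finset.range (m+1), (m.choose j : ℝ) * p^j * (1-p)^(m-j) = 1 := by
  calc ∑ j ∈ Finset.range (m+1), (m.choose j : ℝ) * p^j * (1-p)^(m-j)
      = ∑ j ∈ Finset.range (m+1), p^j * (1-p)^(m-j) * (m.choose j : ℝ) :=
        Finset.sum_congr rfl fun j _ => by ring
    _ = (p + (1-p))^m := (add_pow (R := ℝ) p (1-p) m).symm
    _ = 1 := by norm_num

lemma binom_le_one {p : ℝ} (hp0 : 0 ≤ p) (hp1 : p ≤ 1) {m j : ℕ} (hj : j ∈ Finset.range (m+1)) :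
    (m.choose j : ℝ) * p^j * (1-p)^(m-j) ≤ 1 := by
  calc (m.choose j : ℝ) * p^j * (1-p)^(m-j)
      ≤ ∑ i ∈ Finset.range (m+1), (m.choose i : ℝ) * p^i * (1-p)^(m-i) := by
        refine Finset.single_le_sum (f := fun i => (m.choose i : ℝ) * p^i * (1-p)^(m-i)) ?_ hj
        intro i _
        have h1 : (0:ℝ) ≤ 1 - p := by linarith
        positivity
    _ = 1 := binom_sum_one m

lemma pmf_max {x p : ℝ} {m : ℕ} (hx : 0 < x) (hp : x ≤ p) (hq : x ≤ 1 - p)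
    (hm : 36 ≤ x * m) {j : ℕ} (hj : j ≤ m) :
    (m.choose j : ℝ) * p^j * (1-p)^(m-j) ≤ 8 / Real.sqrt (x * m) := by
  set q : ℝ := 1 - p with hqdef
  set b : ℕ → ℝ := fun k => (m.choose k : ℝ) * p^k * q^(m-k) with hb
  clear_value q b
  have hp0 : 0 < p := lt_of_lt_of_le hx hp
  have hq0 : 0 < q := lt_of_lt_of_le hx hq
  have hp1 : p ≤ 1 := by
    have h := hq0; rw [hqdef] at h; linarith
  have hq1 : q ≤ 1 := by rw [hqdef]; linarith
  have hxm : (0:ℝ) < x * m := by linarith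
  have hm0 : (0:ℝ) < m := by nlinarith
  have hpq : x / 2 ≤ p * q := by
    rcases le_or_gt p (1/2) with h | h
    · have h2 : 1/2 ≤ q := by rw [hqdef]; linarith
      nlinarith
    · have h2 : x ≤ q := hq
      nlinarith
  have hbpos : ∀ k, k ≤ m → 0 < b k := by
    intro k hk
    have h1 : 0 < m.choose k := Nat.choose_pos hk
    have h2 : (0:ℝ) < m.choose k := by exact_mod_cast h1
    simp only [hb]
    positivity
  have hbnn : ∀ k, 0 ≤ b k := by
    intro k
    have h2 : (0:ℝ) ≤ m.choose k := by positivity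
    simp only [hb]
    positivity
  have ident : ∀ k, k < m → b (k+1) * (((k:ℝ)+1) * q) = b k * (((m:ℝ) - k) * p) := by
    intro k hk
    have hch : ((m.choose (k+1) : ℝ) * ((k:ℝ)+1)) = (m.choose k : ℝ) * ((m:ℝ) - k) := by
      have h1 := Nat.choose_succ_right_eq m k
      have h2 : ((m.choose (k+1) * (k+1) : ℕ) : ℝ) = ((m.choose k * (m - k) : ℕ) : ℝ) := by
        exact_mod_cast congrArg Nat.cast h1
      push_cast [Nat.cast_sub hk.le] at h2
      linarith
    have hexp : q ^ (m - (k+1)) * q = q ^ (m - k) := by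
      rw [← pow_succ]
      congr 1
      omega
    calc b (k+1) * (((k:ℝ)+1) * q)
        = ((m.choose (k+1) : ℝ) * ((k:ℝ)+1)) * p^(k+1) * (q^(m-(k+1)) * q) := by
          simp only [hb]; push_cast; ring
      _ = ((m.choose k : ℝ) * ((m:ℝ) - k)) * p^(k+1) * q^(m-k) := by rw [hexp, hch]
      _ = b k * (((m:ℝ) - k) * p) := by simp only [hb]; push_cast; ring
  obtain ⟨j₀, hj₀mem, hj₀max⟩ := Finset.exists_max_image (Finset.range (m+1)) b ⟨0, by simp⟩
  rw [Finset.mem_range] at hj₀mem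
  have hj₀m : j₀ ≤ m := by omega
  set M : ℝ := b j₀ with hM
  have hMpos : 0 < M := by rw [hM]; exact hbpos j₀ hj₀m
  clear_value M
  have hmax : ∀ k, k ≤ m → b k ≤ M := fun k hk => hj₀max k (by rw [Finset.mem_range]; omega)
  have hmpq : (m:ℝ)*p + (m:ℝ)*q = m := by rw [hqdef]; ring
  -- upper bound on j₀
  have hj₀u : (j₀ : ℝ) ≤ (m:ℝ) * p + 1 := by
    rcases Nat.eq_zero_or_pos j₀ with h0 | h0
    · rw [h0]; push_cast; positivity
    · obtain ⟨k, rfl⟩ := Nat.exists_eq_succ_of_ne_zero h0.ne'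
      have hkm : k < m := by omega
      have h1 : b k ≤ b (k+1) := by have h := hmax k hkm.le; rwa [hM] at h
      have hbk : 0 < b k := hbpos k hkm.le
      have hid := ident k hkm
      have h2 : b k * (((k:ℝ)+1) * q) ≤ b k * (((m:ℝ)-k) * p) := by
        rw [← hid]
        exact mul_le_mul_of_nonneg_right h1 (by positivity)
      have h3 : ((k:ℝ)+1) * q ≤ ((m:ℝ)-k) * p := (mul_le_mul_iff_right₀ hbk).mp h2
      rw [hqdef] at h3
      push_cast
      nlinarith [h3, hp1]
  -- lower bound on j₀
  have hj₀l : (m:ℝ) * p - 1 ≤ (j₀ : ℝ) := by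
    rcases eq_or_lt_of_le hj₀m with h0 | h0
    · rw [h0]
      nlinarith [mul_le_mul_of_nonneg_left hp1 hm0.le]
    · have h1 : b (j₀+1) ≤ M := hmax (j₀+1) (by omega)
      have hid := ident j₀ h0
      have h2 : M * (((m:ℝ)-j₀) * p) ≤ M * (((j₀:ℝ)+1) * q) := by
        calc M * (((m:ℝ)-j₀) * p) = b (j₀+1) * (((j₀:ℝ)+1) * q) := by rw [hM]; exact hid.symm
          _ ≤ M * (((j₀:ℝ)+1) * q) := mul_le_mul_of_nonneg_right h1 (by positivity)
      have h3 : ((m:ℝ)-j₀) * p ≤ ((j₀:ℝ)+1) * q := (mul_le_mul_iff_right₀ hMpos).mp h2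
      rw [hqdef] at h3
      nlinarith [h3]
  -- window parameters
  set s : ℝ := Real.sqrt (x * m) with hs
  have hs0 : 0 < s := Real.sqrt_pos.mpr hxm
  have hssq : s * s = x * m := Real.mul_self_sqrt hxm.le
  have hs6 : 6 ≤ s := by
    have h1 : (6:ℝ) = Real.sqrt 36 := by
      rw [show (36:ℝ) = 6^2 by norm_num, Real.sqrt_sq (by norm_num : (0:ℝ) ≤ 6)]
    rw [h1, hs]
    exact Real.sqrt_le_sqrt hm
  clear_value s
  set T : ℕ := ⌊s / 4⌋₊ with hT
  have hT1 : (T:ℝ) ≤ s / 4 := Nat.floor_le (by positivity)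
  have hT2 : s / 4 ≤ (T:ℝ) + 1 := le_of_lt (Nat.lt_floor_add_one _)
  clear_value T
  set u : ℝ := 2 * (2*(T:ℝ)+3) / (x * m) with hu
  clear_value u
  have hu0 : 0 ≤ u := by rw [hu]; positivity
  have hTu : (T:ℝ) * u ≤ 1/2 := by
    have heq : (T:ℝ) * u = ((T:ℝ)*(2*(2*(T:ℝ)+3))) / (x*m) := by rw [hu]; ring
    rw [heq, div_le_iff₀ hxm]
    have hT0 : (0:ℝ) ≤ T := Nat.cast_nonneg T
    have e2 : (T:ℝ)*(T:ℝ) ≤ (s/4)*(s/4) := mul_le_mul hT1 hT1 hT0 (by positivity)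
    have e3 : s*6 ≤ s*s := mul_le_mul_of_nonneg_left hs6 hs0.le
    have e4 : (T:ℝ)*(2*(2*(T:ℝ)+3)) = 4*((T:ℝ)*(T:ℝ)) + 6*(T:ℝ) := by ring
    have e5 : (T:ℝ) ≤ s/4 := hT1
    rw [e4]
    have e6 : 4*((T:ℝ)*(T:ℝ)) ≤ (s*s)/4 := by linarith
    have e7 : 6*(T:ℝ) ≤ (3/2)*s := by linarith
    have e8 : (3/2)*s ≤ (s*s)/4 := by linarith
    have e9 : (s*s)/4 + (s*s)/4 = 1/2*(s*s) := by ring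
    linarith [hssq]
  have hsxm : s ≤ x * m / 6 := by nlinarith
  have hjTm : j₀ + T < m := by
    have h2 : (T:ℝ) ≤ x * m / 24 := by linarith
    have h3 : x * m ≤ (m:ℝ) * q := by nlinarith [mul_le_mul_of_nonneg_left hq hm0.le]
    have h1 : (j₀:ℝ) + T < (m:ℝ) := by linarith
    have h4 : ((j₀ + T: ℕ):ℝ) < (m:ℝ) := by push_cast; linarith
    exact_mod_cast h4
  -- descent step
  have hstep : ∀ k, j₀ ≤ k → k ≤ j₀ + T → k < m → b k - M * u ≤ b (k+1) := by
    intro k hk1 hk2 hkm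
    have hid := ident k hkm
    have hbk : 0 ≤ b k := hbnn k
    have hbkM : b k ≤ M := hmax k hkm.le
    have hkr1 : (k:ℝ) ≤ (j₀:ℝ) + T := by exact_mod_cast hk2
    have hkr0 : (j₀:ℝ) ≤ (k:ℝ) := by exact_mod_cast hk1
    have hnum : ((k:ℝ)+1) * q - ((m:ℝ)-k)*p ≤ 2*(T:ℝ)+3 := by
      have hk3 : (k:ℝ) + 1 ≤ (m:ℝ)*p + (T:ℝ) + 2 := by linarith
      have hk4 : (m:ℝ)*q - (T:ℝ) - 1 ≤ (m:ℝ) - k := by linarith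
      have hT0 : (0:ℝ) ≤ T := Nat.cast_nonneg T
      nlinarith [mul_le_mul_of_nonneg_right hk3 hq0.le,
        mul_le_mul_of_nonneg_right hk4 hp0.le]
    have hden : (m:ℝ) * x / 2 ≤ ((k:ℝ)+1) * q := by
      have h1 : (m:ℝ)*p ≤ (k:ℝ)+1 := by linarith
      have h2 : (m:ℝ)*p*q ≤ ((k:ℝ)+1)*q := mul_le_mul_of_nonneg_right h1 hq0.le
      have h3 : (m:ℝ)*(x/2) ≤ (m:ℝ)*(p*q) := mul_le_mul_of_nonneg_left hpq hm0.le
      nlinarith [h2, h3]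
    have hden0 : 0 < ((k:ℝ)+1) * q := by positivity
    have hkey : (b k - b (k+1)) * (((k:ℝ)+1) * q) ≤ M * (2*(T:ℝ)+3) := by
      have heq : (b k - b (k+1)) * (((k:ℝ)+1) * q)
          = b k * ((((k:ℝ)+1) * q) - (((m:ℝ)-k)*p)) := by
        linear_combination -hid
      rw [heq]
      rcases le_or_gt ((((k:ℝ)+1) * q) - (((m:ℝ)-k)*p)) 0 with hneg | hpos
      · have : b k * ((((k:ℝ)+1) * q) - (((m:ℝ)-k)*p)) ≤ 0 := mul_nonpos_of_nonneg_of_nonpos hbk hneg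
        have hT0 : (0:ℝ) ≤ T := Nat.cast_nonneg T
        nlinarith
      · nlinarith [mul_le_mul_of_nonneg_right hbkM hpos.le]
    have h9 : M * (2*(T:ℝ)+3) ≤ M * u * (((k:ℝ)+1)*q) := by
      have h10 : u * ((m:ℝ)*x/2) = 2*(T:ℝ)+3 := by
        rw [hu]
        field_simp
      have h11 : M * u * ((m:ℝ)*x/2) ≤ M * u * (((k:ℝ)+1)*q) := by
        apply mul_le_mul_of_nonneg_left hden
        positivity
      calc M * (2*(T:ℝ)+3) = M * (u * ((m:ℝ)*x/2)) := by rw [h10]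
        _ = M * u * ((m:ℝ)*x/2) := by ring
        _ ≤ M * u * (((k:ℝ)+1)*q) := h11
    have h12 : (b k - b (k+1)) * (((k:ℝ)+1) * q) ≤ (M * u) * (((k:ℝ)+1)*q) := by
      calc (b k - b (k+1)) * (((k:ℝ)+1) * q) ≤ M * (2*(T:ℝ)+3) := hkey
        _ ≤ M * u * (((k:ℝ)+1)*q) := h9
    have h13 : b k - b (k+1) ≤ M * u := (mul_le_mul_iff_left₀ hden0).mp h12
    linarith
  -- window lower bound
  have hwin : ∀ t, t ≤ T → M * (1 - (t:ℝ) * u) ≤ b (j₀ + t) := by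
    intro t
    induction t with
    | zero => intro _; simp [hM]
    | succ t ih =>
      intro ht
      have ht' : t ≤ T := by omega
      have h1 := ih ht'
      have h2 := hstep (j₀ + t) (by omega) (by omega) (by omega)
      have h3 : b (j₀ + t) - M * u ≤ b (j₀ + (t+1)) := by
        rw [show j₀ + (t+1) = (j₀ + t) + 1 by omega]
        exact h2
      push_cast
      nlinarith [h1, h3]
  -- summing over the window
  have hsum : ((T:ℝ)+1) * (M / 2) ≤ 1 := by
    have h1 : ∀ t ∈ Finset.range (T+1), M / 2 ≤ b (j₀ + t) := by
      intro t ht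
      rw [Finset.mem_range] at ht
      have ht' : t ≤ T := by omega
      have h2 := hwin t ht'
      have h3 : (t:ℝ) * u ≤ (T:ℝ) * u := by
        apply mul_le_mul_of_nonneg_right _ hu0
        exact_mod_cast ht'
      have h4 : (t:ℝ)*u ≤ 1/2 := le_trans h3 hTu
      have h5 : M*((t:ℝ)*u) ≤ M*(1/2) := mul_le_mul_of_nonneg_left h4 hMpos.le
      nlinarith [h2, h5]
    have h2 : ((T:ℝ)+1) * (M/2) ≤ ∑ t ∈ Finset.range (T+1), b (j₀ + t) := by
      calc ((T:ℝ)+1) * (M/2) = ∑ _t ∈ Finset.range (T+1), M/2 := by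
            rw [Finset.sum_const, Finset.card_range, nsmul_eq_mul]; push_cast; ring
        _ ≤ _ := Finset.sum_le_sum h1
    have h3 : ∑ t ∈ Finset.range (T+1), b (j₀ + t) = ∑ k ∈ Finset.Ico j₀ (j₀ + (T+1)), b k := by
      rw [Finset.sum_Ico_eq_sum_range]
      simp
    have h4 : ∑ k ∈ Finset.Ico j₀ (j₀ + (T+1)), b k ≤ ∑ k ∈ Finset.range (m+1), b k := by
      apply Finset.sum_le_sum_of_subset_of_nonneg
      · intro k hk
        rw [Finset.mem_Ico] at hk
        rw [Finset.mem_range]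
        omega
      · intro k _ _
        exact hbnn k
    have h5 : ∑ k ∈ Finset.range (m+1), b k = 1 := by
      simp only [hb, hqdef]
      exact binom_sum_one m
    rw [h3] at h2
    linarith
  -- conclude
  have hM8 : M ≤ 8 / s := by
    rw [le_div_iff₀ hs0]
    have e1 : (s/4)*(M/2) ≤ ((T:ℝ)+1)*(M/2) := mul_le_mul_of_nonneg_right hT2 (by positivity)
    linarith
  calc (m.choose j : ℝ) * p^j * q^(m-j) = b j := by simp only [hb]
    _ ≤ M := hmax j hj
    _ ≤ 8 / s := hM8
lemma weight_bound {x p : ℝ} {m ℓ : ℕ} (hx : 0 < x) (hp : x ≤ p) (hq : x ≤ 1-p)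
    (hℓ : ℓ < m) :
    (m.choose ℓ : ℝ) * ((m:ℝ) - ℓ) * (p^ℓ * (1-p)^(m-ℓ)) ≤ 8/x^2 * Real.sqrt m := by
  have hp0 : 0 < p := lt_of_lt_of_le hx hp
  have hq0 : 0 < 1 - p := lt_of_lt_of_le hx hq
  have hp1 : p ≤ 1 := by linarith
  have hx1 : x ≤ 1 := by linarith
  have hm0 : (0:ℝ) < m := by
    have h : (1:ℝ) ≤ m := by exact_mod_cast Nat.one_le_iff_ne_zero.mpr (by omega)
    linarith
  have hℓ1 : ((ℓ:ℝ)+1) ≤ (m:ℝ) := by exact_mod_cast hℓ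
  have hℓm : (ℓ:ℝ) ≤ (m:ℝ) := by linarith
  set s : ℝ := Real.sqrt m with hs
  have hs0 : 0 < s := Real.sqrt_pos.mpr hm0
  have hssq : s * s = m := Real.mul_self_sqrt hm0.le
  clear_value s
  set W : ℝ := (m.choose ℓ : ℝ) * ((m:ℝ) - ℓ) * (p^ℓ * (1-p)^(m-ℓ)) with hW
  have hWnn : 0 ≤ W := by
    rw [hW]
    have h1 : (0:ℝ) ≤ m.choose ℓ := by positivity
    have h2 : (0:ℝ) ≤ (m:ℝ) - ℓ := by linarith
    positivity
  clear_value W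
  rcases le_or_gt (s * x) 8 with hcase | hcase
  · -- small m : W ≤ m ≤ (8/x²) s
    have hb1 : (m.choose ℓ : ℝ) * p^ℓ * (1-p)^(m-ℓ) ≤ 1 :=
      binom_le_one hp0.le hp1 (by rw [Finset.mem_range]; omega)
    have hWm : W ≤ (m:ℝ) := by
      rw [hW]
      have h2 : (0:ℝ) ≤ (m:ℝ) - ℓ := by linarith
      calc (m.choose ℓ : ℝ) * ((m:ℝ) - ℓ) * (p^ℓ * (1-p)^(m-ℓ))
          = ((m:ℝ) - ℓ) * ((m.choose ℓ : ℝ) * p^ℓ * (1-p)^(m-ℓ)) := by ring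
        _ ≤ ((m:ℝ) - ℓ) * 1 := by
            apply mul_le_mul_of_nonneg_left hb1 h2
        _ ≤ (m:ℝ) := by linarith
    have hms : (m:ℝ) ≤ 8/x^2 * s := by
      have h1 : s ≤ 8/x := by
        rw [le_div_iff₀ hx]; linarith [mul_comm s x]
      have h2 : (8:ℝ)/x ≤ 8/x^2 := by
        rw [div_le_div_iff₀ hx (by positivity)]
        nlinarith
      calc (m:ℝ) = s * s := hssq.symm
        _ ≤ s * (8/x) := by nlinarith
        _ ≤ (8/x^2) * s := by
            rw [mul_comm]
            apply mul_le_mul_of_nonneg_right h2 hs0.le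
    linarith
  · -- large m : use the pmf bound
    have hxm36 : 36 ≤ x * m := by
      have h1 : 8/x ≤ s := by rw [div_le_iff₀ hx]; linarith [mul_comm s x]
      have h2 : (8:ℝ) ≤ 8/x := by
        rw [le_div_iff₀ hx]; nlinarith
      have h3 : (8:ℝ) ≤ s := by linarith
      have h4 : x * (m:ℝ) = (x*s)*s := by rw [mul_assoc, hssq]
      nlinarith
    set B : ℝ := (m.choose (ℓ+1) : ℝ) * p^(ℓ+1) * (1-p)^(m-(ℓ+1)) with hB
    have hBnn : 0 ≤ B := by
      rw [hB]
      have h1 : (0:ℝ) ≤ m.choose (ℓ+1) := by positivity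
      positivity
    have hBle : B ≤ 8 / Real.sqrt (x*m) := by
      rw [hB]
      exact pmf_max hx hp hq hxm36 (by omega)
    clear_value B
    -- W * p = (ℓ+1) * (1-p) * B
    have hWident : W * p = ((ℓ:ℝ)+1) * (1-p) * B := by
      have hch : (m.choose ℓ : ℝ) * ((m:ℝ) - ℓ) = (m.choose (ℓ+1) : ℝ) * ((ℓ:ℝ)+1) := by
        have h1 := Nat.choose_succ_right_eq m ℓ
        have h2 : ((m.choose (ℓ+1) * (ℓ+1) : ℕ) : ℝ) = ((m.choose ℓ * (m - ℓ) : ℕ) : ℝ) := by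
          exact_mod_cast congrArg Nat.cast h1
        push_cast [Nat.cast_sub hℓ.le] at h2
        linarith
      have hexp : (1-p)^(m-ℓ) = (1-p)^(m-(ℓ+1)) * (1-p) := by
        rw [← pow_succ]
        congr 1
        omega
      rw [hW, hch, hexp, hB]
      ring
    have hWp : W * p ≤ (m:ℝ) * B := by
      rw [hWident]
      have h1 : ((ℓ:ℝ)+1) * (1-p) ≤ (m:ℝ) * 1 :=
        mul_le_mul hℓ1 (by linarith) hq0.le hm0.le
      have h2 := mul_le_mul_of_nonneg_right h1 hBnn
      calc ((ℓ:ℝ)+1) * (1-p) * B ≤ ((m:ℝ) * 1) * B := h2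
        _ = (m:ℝ) * B := by ring
    -- √(xm) ≥ x s
    have hsqrt : x * s ≤ Real.sqrt (x*m) := by
      have h1 : x * s = Real.sqrt (x^2 * m) := by
        rw [Real.sqrt_mul (by positivity), Real.sqrt_sq hx.le, hs]
      rw [h1]
      apply Real.sqrt_le_sqrt
      nlinarith
    have hxs0 : 0 < x * s := by positivity
    have hB2 : B ≤ 8 / (x * s) := by
      calc B ≤ 8 / Real.sqrt (x*m) := hBle
        _ ≤ 8 / (x*s) := by
            apply div_le_div_of_nonneg_left (by norm_num) hxs0 hsqrt
    -- combine : W ≤ m B / x ≤ (8/x²) s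
    have hWx : W * x ≤ (m:ℝ) * B := by
      have h1 : W * x ≤ W * p := mul_le_mul_of_nonneg_left hp hWnn
      linarith
    have hmB : (m:ℝ) * B ≤ (8/x^2 * s) * x := by
      have h1 : (m:ℝ) * B ≤ (m:ℝ) * (8/(x*s)) := mul_le_mul_of_nonneg_left hB2 hm0.le
      have h2 : (m:ℝ) * (8/(x*s)) = (8/x^2 * s) * x := by
        rw [← hssq]
        field_simp
      linarith
    have := hWx.trans hmB
    exact le_of_mul_le_mul_right this hx


section LBridgeAux
variable {V : Type*} [Fintype V] {G : SimpleGraph V} {c : ℝ}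

lemma isLBridge_iff_of_mem_iff {F F' : Finset (Sym2 V)} {e : Sym2 V}
    (h : ∀ a, a ∈ F ↔ a = e ∨ a ∈ F') : IsLBridge G c F e ↔ IsLBridge G c F' e := by
  have h1 : F.erase e = F'.erase e := by
    ext a
    simp only [Finset.mem_erase]
    constructor
    · rintro ⟨hne, ha⟩
      rcases (h a).mp ha with rfl | ha'
      · exact absurd rfl hne
      · exact ⟨hne, ha'⟩
    · rintro ⟨hne, ha⟩
      exact ⟨hne, (h a).mpr (Or.inr ha)⟩
  unfold IsLBridge
  rw [h1]

lemma isLBridge_not_mem {F : Finset (Sym2 V)} {e : Sym2 V} (he : e ∉ F) :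
    IsLBridge G c F e ↔ (e ∈ G.edgeSet ∧ ∃ u v : V, e = s(u, v) ∧
      ¬ (SimpleGraph.fromEdgeSet (↑F : Set (Sym2 V))).Reachable u v ∧
      c * Fintype.card V ≤ (compCard F u : ℝ) ∧
      c * Fintype.card V ≤ (compCard F v : ℝ)) := by
  unfold IsLBridge
  rw [Finset.erase_eq_of_notMem he]

end LBridgeAux

theorem L_bridge_probability_bound
    (x b c : ℝ) (hx : 0 < x) (hb : 0 < b) (hc : 0 < c) (Δ : ℕ) :
    ∃ β > (0 : ℝ), ∀ (V : Type) [Fintype V] [DecidableEq V]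
      (G : SimpleGraph V) [DecidableRel G.Adj],
      (∀ v, G.degree v ≤ Δ) → VertexExpander G b →
      ∀ p ∈ Set.Icc x (1 - x),
      (1 / (G.edgeFinset.card : ℝ)) *
          ∑ e ∈ G.edgeFinset, percProb G p {F | IsLBridge G c F e}
        ≤ β / Real.sqrt (Fintype.card V) := by
  refine ⟨4 * Real.sqrt 2 / (c^2 * x^3) + 1, by positivity, ?_⟩
  intro V _ _ G _ hdeg hexp p hp
  obtain ⟨hpx, hpx1⟩ := hp
  have hp0 : 0 < p := lt_of_lt_of_le hx hpx
  have hqx : x ≤ 1 - p := by linarith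
  have hq0 : 0 < 1 - p := lt_of_lt_of_le hx hqx
  set n : ℕ := Fintype.card V with hn
  set E : Finset (Sym2 V) := G.edgeFinset with hE
  set m : ℕ := E.card with hm
  rcases Nat.eq_zero_or_pos m with hm0 | hm0
  · -- no edges : LHS = 0
    have hEempty : E = ∅ := Finset.card_eq_zero.mp (by rw [← hm]; exact hm0)
    rw [hEempty]
    simp only [Finset.sum_empty, mul_zero]
    positivity
  · -- main case
    -- n ≥ 2
    have hn2 : 2 ≤ n := by
      by_contra hcon
      have hsub : Subsingleton V := by
        refine Fintype.card_le_one_iff_subsingleton.mp ?_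
        omega
      have hEe : E = ∅ := by
        rw [hE]
        ext e
        simp only [SimpleGraph.mem_edgeFinset, Finset.notMem_empty, iff_false]
        intro hmem
        induction e using Sym2.ind with
        | _ a b' =>
          rw [SimpleGraph.mem_edgeSet] at hmem
          exact G.irrefl (by rwa [Subsingleton.elim b' a] at hmem)
      rw [hm, hEe] at hm0
      simp at hm0
    have hn0 : (0:ℝ) < n := by
      have : (2:ℝ) ≤ n := by exact_mod_cast hn2
      linarith
    -- minimum degree at least one
    have hdeg1 : ∀ v : V, 1 ≤ G.degree v := by
      intro v
      by_contra hv
      push_neg at hv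
      have hd0 : G.degree v = 0 := by omega
      have hnone : ∀ w : V, ¬ G.Adj v w := by
        intro w hw
        have h1 : w ∈ G.neighborFinset v := (SimpleGraph.mem_neighborFinset G v w).mpr hw
        have h2 : (G.neighborFinset v).card = 0 := hd0
        rw [Finset.card_eq_zero] at h2
        rw [h2] at h1
        exact Finset.notMem_empty w h1
      have h1 := hexp {v} (by simp) (by
        simp only [Finset.card_singleton, Nat.cast_one]
        rw [← hn]
        have : (2:ℝ) ≤ n := by exact_mod_cast hn2
        linarith)
      have h2 : {w | w ∉ ({v} : Finset V) ∧ ∃ u ∈ ({v} : Finset V), G.Adj u w} = (∅ : Set V) := by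
        ext w
        simp only [Set.mem_setOf_eq, Set.mem_empty_iff_false, iff_false, not_and]
        intro _hw
        rintro ⟨u, hu, hadj⟩
        rw [Finset.mem_singleton] at hu
        subst hu
        exact hnone w hadj
      rw [h2] at h1
      simp only [Set.ncard_empty, Nat.cast_zero, Finset.card_singleton, Nat.cast_one,
        mul_one] at h1
      linarith
    have hn2m : (n:ℝ) ≤ 2 * m := by
      have h1 : ∑ v : V, G.degree v = 2 * m := by
        rw [hm, hE]
        exact G.sum_degrees_eq_twice_card_edges
      have h2 : n ≤ ∑ v : V, G.degree v := by
        calc n = ∑ _v : V, 1 := by rw [Finset.sum_const, Finset.card_univ, smul_eq_mul, mul_one, hn]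
          _ ≤ ∑ v : V, G.degree v := Finset.sum_le_sum fun v _ => hdeg1 v
      have h3 : n ≤ 2 * m := by omega
      exact_mod_cast h3
    have hm0' : (0:ℝ) < m := by
      have : (1:ℝ) ≤ m := by exact_mod_cast hm0
      linarith
    -- KEY1 : killing the (1-p) factor
    have key1 : ∀ e ∈ E, (1-p) * percProb G p {F | IsLBridge G c F e}
        = ∑ F ∈ E.powerset,
            (if e ∉ F ∧ IsLBridge G c F e then p ^ F.card * (1-p) ^ (m - F.card) else 0) := by
      intro e he
      have hee : e ∉ E.erase e := Finset.notMem_erase e E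
      have hEe : insert e (E.erase e) = E := Finset.insert_erase he
      have hcard_erase : (E.erase e).card = m - 1 := by
        rw [Finset.card_erase_of_mem he, ← hm]
      unfold percProb
      rw [← hE, ← hm]
      simp only [Set.mem_setOf_eq]
      rw [← hEe, Finset.sum_powerset_insert hee, Finset.sum_powerset_insert hee]
      rw [mul_add, Finset.mul_sum, Finset.mul_sum, ← Finset.sum_add_distrib, ← Finset.sum_add_distrib]
      refine Finset.sum_congr rfl fun F₀ hF₀ => ?_
      rw [Finset.mem_powerset] at hF₀
      have he₀ : e ∉ F₀ := fun h => hee (hF₀ h)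
      have hcle : F₀.card ≤ m - 1 := hcard_erase ▸ Finset.card_le_card hF₀
      have hbr : IsLBridge G c (insert e F₀) e ↔ IsLBridge G c F₀ e :=
        isLBridge_iff_of_mem_iff (fun a => by simp)
      have hci : (insert e F₀).card = F₀.card + 1 := Finset.card_insert_of_notMem he₀
      rw [hci]
      by_cases hLb : IsLBridge G c F₀ e
      · rw [if_pos hLb, if_pos (hbr.mpr hLb),
          if_pos (show e ∉ F₀ ∧ IsLBridge G c F₀ e from ⟨he₀, hLb⟩),
          if_neg (show ¬(e ∉ insert e F₀ ∧ IsLBridge G c (insert e F₀) e) from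
            fun h => h.1 (Finset.mem_insert_self e F₀))]
        have hexp : (1-p)^(m - F₀.card) = (1-p)^(m-(F₀.card+1)) * (1-p) := by
          rw [← pow_succ]
          congr 1
          omega
        rw [hexp]
        ring
      · rw [if_neg hLb, if_neg (fun h => hLb (hbr.mp h)),
          if_neg (show ¬(e ∉ F₀ ∧ IsLBridge G c F₀ e) from fun h => hLb h.2),
          if_neg (show ¬(e ∉ insert e F₀ ∧ IsLBridge G c (insert e F₀) e) from
            fun h => h.1 (Finset.mem_insert_self e F₀))]
        ring
    -- the closed L-bridge count
    set X : Finset (Sym2 V) → ℕ :=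
      fun F => ((E \ F).filter (fun e => IsLBridge G c F e)).card with hX
    -- KEY2 : swapping the sums
    have key2 : ∑ e ∈ E, (∑ F ∈ E.powerset,
          (if e ∉ F ∧ IsLBridge G c F e then p ^ F.card * (1-p) ^ (m - F.card) else 0))
        = ∑ F ∈ E.powerset, (p ^ F.card * (1-p) ^ (m - F.card)) * (X F : ℝ) := by
      rw [Finset.sum_comm]
      refine Finset.sum_congr rfl fun F hF => ?_
      have h1 : ∑ e ∈ E, (if e ∉ F ∧ IsLBridge G c F e
            then p ^ F.card * (1-p) ^ (m - F.card) else 0)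
          = ∑ e ∈ E.filter (fun e => e ∉ F ∧ IsLBridge G c F e),
              p ^ F.card * (1-p) ^ (m - F.card) := (Finset.sum_filter _ _).symm
      have h2 : E.filter (fun e => e ∉ F ∧ IsLBridge G c F e)
          = (E \ F).filter (fun e => IsLBridge G c F e) := by
        ext a
        simp only [Finset.mem_filter, Finset.mem_sdiff]
        tauto
      rw [h1, h2, Finset.sum_const, nsmul_eq_mul, hX, mul_comm]
    -- cast of Fintype.card V
    have hnV : ((Fintype.card V : ℕ) : ℝ) = (n:ℝ) := by rw [hn]
    have hgE : ∀ F : Finset (Sym2 V), (gFun F : ℝ) ≤ (n:ℝ)^2 := by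
      intro F
      have h1 := gFun_le (F := F)
      have h2 : (gFun F : ℝ) ≤ ((Fintype.card V : ℕ):ℝ) * ((Fintype.card V : ℕ):ℝ) := by
        exact_mod_cast h1
      rw [hnV] at h2
      nlinarith [h2]
    -- STEP inequality
    have step : ∀ ℓ, ℓ < m →
        2*c^2*(n:ℝ)^2 * (∑ F ∈ Finset.powersetCard ℓ E, (X F : ℝ))
          ≤ ((ℓ:ℝ)+1) * (∑ F ∈ Finset.powersetCard (ℓ+1) E, (gFun F : ℝ))
            - ((m:ℝ)-(ℓ:ℝ)) * (∑ F ∈ Finset.powersetCard ℓ E, (gFun F : ℝ)) := by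
      intro ℓ hℓ
      have s2 : ∀ F ∈ Finset.powersetCard ℓ E,
          2*c^2*(n:ℝ)^2 * (X F : ℝ)
            ≤ ∑ e ∈ E \ F, ((gFun (insert e F) : ℝ) - (gFun F : ℝ)) := by
        intro F hF
        rw [Finset.mem_powersetCard] at hF
        have s1 : ∀ e ∈ E \ F, (if IsLBridge G c F e then 2*c^2*(n:ℝ)^2 else 0)
            ≤ (gFun (insert e F) : ℝ) - (gFun F : ℝ) := by
          intro e he
          rw [Finset.mem_sdiff] at he
          by_cases hLb : IsLBridge G c F e
          · rw [if_pos hLb]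
            obtain ⟨heS, u, v, heq, hnr, hcu, hcv⟩ := (isLBridge_not_mem he.2).mp hLb
            have hkey := gFun_insert F u v hnr
            rw [← heq] at hkey
            have hkey' : (gFun F : ℝ) + (compCard F u : ℝ) * (compCard F v : ℝ) * 2
                ≤ (gFun (insert e F) : ℝ) := by exact_mod_cast hkey
            rw [hnV] at hcu hcv
            have hcn : (0:ℝ) ≤ c * (n:ℝ) := by positivity
            have hab : (c*(n:ℝ)) * (c*(n:ℝ)) ≤ (compCard F u : ℝ) * (compCard F v : ℝ) :=
              mul_le_mul hcu hcv hcn (le_trans hcn hcu)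
            nlinarith [hab, hkey']
          · rw [if_neg hLb]
            have h1 := gFun_mono (Finset.subset_insert e F)
            have h2 : (gFun F:ℝ) ≤ (gFun (insert e F) : ℝ) := by exact_mod_cast h1
            linarith
        have hsum1 : ∑ e ∈ E \ F, (if IsLBridge G c F e then 2*c^2*(n:ℝ)^2 else 0)
            = 2*c^2*(n:ℝ)^2 * (X F : ℝ) := by
          rw [← Finset.sum_filter, Finset.sum_const, nsmul_eq_mul, hX, mul_comm]
        calc 2*c^2*(n:ℝ)^2 * (X F : ℝ)
            = ∑ e ∈ E \ F, (if IsLBridge G c F e then 2*c^2*(n:ℝ)^2 else 0) := hsum1.symm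
          _ ≤ _ := Finset.sum_le_sum s1
      have parta : ∑ F ∈ Finset.powersetCard ℓ E, ∑ e ∈ E \ F, (gFun (insert e F) : ℝ)
          = ((ℓ:ℝ)+1) * ∑ F ∈ Finset.powersetCard (ℓ+1) E, (gFun F : ℝ) := by
        have hps := pair_sum E (fun H => if H.card = ℓ+1 then (gFun H : ℝ) else 0)
        have hL : ∑ H ∈ E.powerset, ∑ e ∈ E \ H,
              (if (insert e H).card = ℓ+1 then (gFun (insert e H):ℝ) else 0)
            = ∑ F ∈ Finset.powersetCard ℓ E, ∑ e ∈ E \ F, (gFun (insert e F) : ℝ) := by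
          rw [Finset.powersetCard_eq_filter, Finset.sum_filter]
          refine Finset.sum_congr rfl fun H hH => ?_
          by_cases hcard : H.card = ℓ
          · rw [if_pos hcard]
            refine Finset.sum_congr rfl fun e he => ?_
            rw [Finset.mem_sdiff] at he
            rw [if_pos (by rw [Finset.card_insert_of_notMem he.2, hcard])]
          · rw [if_neg hcard]
            refine Finset.sum_eq_zero fun e he => ?_
            rw [Finset.mem_sdiff] at he
            rw [if_neg (by rw [Finset.card_insert_of_notMem he.2]; omega)]
          
        have hR : ∑ H ∈ E.powerset, (H.card : ℝ) *
              (if H.card = ℓ+1 then (gFun H : ℝ) else 0)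
            = ((ℓ:ℝ)+1) * ∑ F ∈ Finset.powersetCard (ℓ+1) E, (gFun F : ℝ) := by
          rw [Finset.powersetCard_eq_filter, Finset.mul_sum, Finset.sum_filter]
          refine Finset.sum_congr rfl fun H hH => ?_
          by_cases hcard : H.card = ℓ+1
          · rw [if_pos hcard, if_pos hcard, hcard]
            push_cast
            ring
          · rw [if_neg hcard, if_neg hcard, mul_zero]
        rw [← hL, ← hR]
        exact hps
      have partb : ∑ F ∈ Finset.powersetCard ℓ E, ∑ e ∈ E \ F, (gFun F : ℝ)
          = ((m:ℝ)-(ℓ:ℝ)) * ∑ F ∈ Finset.powersetCard ℓ E, (gFun F : ℝ) := by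
        rw [Finset.mul_sum]
        refine Finset.sum_congr rfl fun F hF => ?_
        rw [Finset.mem_powersetCard] at hF
        rw [Finset.sum_const, nsmul_eq_mul]
        have hcd : (E \ F).card = m - ℓ := by
          rw [Finset.card_sdiff_of_subset hF.1, ← hm, hF.2]
        rw [hcd, Nat.cast_sub hℓ.le]
      calc 2*c^2*(n:ℝ)^2 * (∑ F ∈ Finset.powersetCard ℓ E, (X F : ℝ))
          = ∑ F ∈ Finset.powersetCard ℓ E, 2*c^2*(n:ℝ)^2 * (X F : ℝ) := Finset.mul_sum _ _ _
        _ ≤ ∑ F ∈ Finset.powersetCard ℓ E,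
              ∑ e ∈ E \ F, ((gFun (insert e F) : ℝ) - (gFun F : ℝ)) := Finset.sum_le_sum s2
        _ = (∑ F ∈ Finset.powersetCard ℓ E, ∑ e ∈ E \ F, (gFun (insert e F) : ℝ))
            - (∑ F ∈ Finset.powersetCard ℓ E, ∑ e ∈ E \ F, (gFun F : ℝ)) := by
            rw [← Finset.sum_sub_distrib]
            exact Finset.sum_congr rfl fun F _ => by rw [Finset.sum_sub_distrib]
        _ = ((ℓ:ℝ)+1) * (∑ F ∈ Finset.powersetCard (ℓ+1) E, (gFun F : ℝ))
            - ((m:ℝ)-(ℓ:ℝ)) * (∑ F ∈ Finset.powersetCard ℓ E, (gFun F : ℝ)) := by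
            rw [parta, partb]
    -- telescoping with the binomial weight bound
    set Sg : ℕ → ℝ := fun ℓ => ∑ F ∈ Finset.powersetCard ℓ E, (gFun F : ℝ) with hSg
    set uu : ℕ → ℝ := fun ℓ => Sg ℓ / (m.choose ℓ : ℝ) with huu
    have hSgnn : ∀ ℓ, 0 ≤ Sg ℓ := by
      intro ℓ
      rw [hSg]
      exact Finset.sum_nonneg fun F _ => by positivity
    have hn2pos : (0:ℝ) < (n:ℝ)^2 := by positivity
    have tele : ∀ ℓ, ℓ < m →
        (∑ F ∈ Finset.powersetCard ℓ E, (X F:ℝ)) * (p^ℓ * (1-p)^(m-ℓ))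
          ≤ (8/x^2 * Real.sqrt m / (2*c^2*(n:ℝ)^2)) * (uu (ℓ+1) - uu ℓ) := by
      intro ℓ hℓ
      have hstep := step ℓ hℓ
      have hc0 : (0:ℝ) < (m.choose ℓ : ℝ) := by exact_mod_cast Nat.choose_pos hℓ.le
      have hc1 : (0:ℝ) < (m.choose (ℓ+1) : ℝ) := by exact_mod_cast Nat.choose_pos hℓ
      have hml : (0:ℝ) < (m:ℝ) - ℓ := by
        have : (ℓ:ℝ) < (m:ℝ) := by exact_mod_cast hℓ
        linarith
      have hch : (m.choose ℓ : ℝ) * ((m:ℝ) - ℓ) = (m.choose (ℓ+1) : ℝ) * ((ℓ:ℝ)+1) := by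
        have h1 := Nat.choose_succ_right_eq m ℓ
        have h2 : ((m.choose (ℓ+1) * (ℓ+1) : ℕ) : ℝ) = ((m.choose ℓ * (m - ℓ) : ℕ) : ℝ) := by
          exact_mod_cast congrArg Nat.cast h1
        push_cast [Nat.cast_sub hℓ.le] at h2
        linarith
      have hden0 : (0:ℝ) < (m.choose ℓ : ℝ) * ((m:ℝ)-ℓ) := by positivity
      have h1 : uu (ℓ+1) * ((m.choose ℓ : ℝ) * ((m:ℝ)-ℓ)) = ((ℓ:ℝ)+1) * Sg (ℓ+1) := by
        rw [huu, hch]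
        field_simp
      have h2 : uu ℓ * ((m.choose ℓ : ℝ) * ((m:ℝ)-ℓ)) = ((m:ℝ)-(ℓ:ℝ)) * Sg ℓ := by
        rw [huu]
        field_simp
      have hdd : (uu (ℓ+1) - uu ℓ) * ((m.choose ℓ : ℝ) * ((m:ℝ)-ℓ))
          = ((ℓ:ℝ)+1) * Sg (ℓ+1) - ((m:ℝ)-(ℓ:ℝ)) * Sg ℓ := by
        rw [sub_mul, h1, h2]
      have hAnn : (0:ℝ) ≤ ∑ F ∈ Finset.powersetCard ℓ E, (X F:ℝ) :=
        Finset.sum_nonneg fun F _ => by positivity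
      have hstep' : 2*c^2*(n:ℝ)^2 * (∑ F ∈ Finset.powersetCard ℓ E, (X F:ℝ))
          ≤ (uu (ℓ+1) - uu ℓ) * ((m.choose ℓ : ℝ) * ((m:ℝ)-ℓ)) := by
        rw [hdd]
        exact hstep
      have hdiffnn : 0 ≤ uu (ℓ+1) - uu ℓ := by
        have h3 : (0:ℝ) ≤ (uu (ℓ+1) - uu ℓ) * ((m.choose ℓ : ℝ) * ((m:ℝ)-ℓ)) := by
          have h4 : (0:ℝ) ≤ 2*c^2*(n:ℝ)^2 * (∑ F ∈ Finset.powersetCard ℓ E, (X F:ℝ)) := by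
            have : (0:ℝ) ≤ 2*c^2*(n:ℝ)^2 := by positivity
            exact mul_nonneg this hAnn
          linarith
        have h5 : (0:ℝ) ≤ ((uu (ℓ+1) - uu ℓ) * ((m.choose ℓ : ℝ) * ((m:ℝ)-ℓ))) / ((m.choose ℓ : ℝ) * ((m:ℝ)-ℓ)) :=
          div_nonneg h3 hden0.le
        rwa [mul_div_cancel_right₀ _ hden0.ne'] at h5
      have hwnn : (0:ℝ) ≤ p^ℓ * (1-p)^(m-ℓ) := by positivity
      have hwb : (m.choose ℓ : ℝ) * ((m:ℝ) - ℓ) * (p^ℓ * (1-p)^(m-ℓ)) ≤ 8/x^2 * Real.sqrt m :=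
        weight_bound hx hpx hqx hℓ
      have h3 : (∑ F ∈ Finset.powersetCard ℓ E, (X F:ℝ)) * (p^ℓ * (1-p)^(m-ℓ)) * (2*c^2*(n:ℝ)^2)
          ≤ ((m.choose ℓ : ℝ) * ((m:ℝ)-ℓ) * (p^ℓ * (1-p)^(m-ℓ))) * (uu (ℓ+1) - uu ℓ) := by
        have h4 := mul_le_mul_of_nonneg_right hstep' hwnn
        calc (∑ F ∈ Finset.powersetCard ℓ E, (X F:ℝ)) * (p^ℓ * (1-p)^(m-ℓ)) * (2*c^2*(n:ℝ)^2)
            = 2*c^2*(n:ℝ)^2 * (∑ F ∈ Finset.powersetCard ℓ E, (X F:ℝ)) * (p^ℓ * (1-p)^(m-ℓ)) := by ring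
          _ ≤ (uu (ℓ+1) - uu ℓ) * ((m.choose ℓ : ℝ) * ((m:ℝ)-ℓ)) * (p^ℓ * (1-p)^(m-ℓ)) := h4
          _ = ((m.choose ℓ : ℝ) * ((m:ℝ)-ℓ) * (p^ℓ * (1-p)^(m-ℓ))) * (uu (ℓ+1) - uu ℓ) := by ring
      have h5 : ((m.choose ℓ : ℝ) * ((m:ℝ)-ℓ) * (p^ℓ * (1-p)^(m-ℓ))) * (uu (ℓ+1) - uu ℓ)
          ≤ (8/x^2 * Real.sqrt m) * (uu (ℓ+1) - uu ℓ) :=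
        mul_le_mul_of_nonneg_right hwb hdiffnn
      have h6 := h3.trans h5
      have hcn2 : (0:ℝ) < 2*c^2*(n:ℝ)^2 := by positivity
      rw [show (8/x^2 * Real.sqrt m / (2*c^2*(n:ℝ)^2)) * (uu (ℓ+1) - uu ℓ)
          = ((8/x^2 * Real.sqrt m) * (uu (ℓ+1) - uu ℓ)) / (2*c^2*(n:ℝ)^2) by ring]
      rw [le_div_iff₀ hcn2]
      exact h6
    -- fiberwise decomposition of the expectation
    have fib : ∑ F ∈ E.powerset, (p ^ F.card * (1-p) ^ (m - F.card)) * (X F : ℝ)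
        = ∑ ℓ ∈ Finset.range (m+1),
            (∑ F ∈ Finset.powersetCard ℓ E, (X F:ℝ)) * (p^ℓ*(1-p)^(m-ℓ)) := by
      have h0 : ∀ F ∈ E.powerset, F.card ∈ Finset.range (m+1) := by
        intro F hF
        rw [Finset.mem_range]
        have h1 := Finset.card_le_card (Finset.mem_powerset.mp hF)
        omega
      rw [← Finset.sum_fiberwise_of_maps_to h0
        (fun F => (p ^ F.card * (1-p) ^ (m - F.card)) * (X F : ℝ))]
      refine Finset.sum_congr rfl fun ℓ hℓ => ?_
      rw [Finset.powersetCard_eq_filter, Finset.sum_mul]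
      refine Finset.sum_congr rfl fun F hF => ?_
      rw [Finset.mem_filter] at hF
      rw [hF.2]
      ring
    have hlastzero : ∀ F ∈ Finset.powersetCard m E, (X F : ℝ) = 0 := by
      intro F hF
      rw [Finset.mem_powersetCard] at hF
      have hFE : F = E := Finset.eq_of_subset_of_card_le hF.1 (by rw [← hm, hF.2])
      rw [hX, hFE]
      simp
    -- the expectation bound
    have hEX : ∑ F ∈ E.powerset, (p ^ F.card * (1-p) ^ (m - F.card)) * (X F : ℝ)
        ≤ 4 * Real.sqrt m / (c^2 * x^2) := by
      rw [fib, Finset.sum_range_succ]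
      have hz : (∑ F ∈ Finset.powersetCard m E, (X F:ℝ)) * (p^m*(1-p)^(m-m)) = 0 := by
        rw [Finset.sum_congr rfl hlastzero]
        simp
      rw [hz, add_zero]
      have h1 : ∑ ℓ ∈ Finset.range m,
            (∑ F ∈ Finset.powersetCard ℓ E, (X F:ℝ)) * (p^ℓ*(1-p)^(m-ℓ))
          ≤ ∑ ℓ ∈ Finset.range m,
            (8/x^2 * Real.sqrt m / (2*c^2*(n:ℝ)^2)) * (uu (ℓ+1) - uu ℓ) := by
        refine Finset.sum_le_sum fun ℓ hℓ => ?_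
        rw [Finset.mem_range] at hℓ
        exact tele ℓ hℓ
      have h2 : ∑ ℓ ∈ Finset.range m,
            (8/x^2 * Real.sqrt m / (2*c^2*(n:ℝ)^2)) * (uu (ℓ+1) - uu ℓ)
          = (8/x^2 * Real.sqrt m / (2*c^2*(n:ℝ)^2)) * (uu m - uu 0) := by
        rw [← Finset.mul_sum, Finset.sum_range_sub]
      have h3 : uu m - uu 0 ≤ (n:ℝ)^2 := by
        have h4 : uu m ≤ (n:ℝ)^2 := by
          simp only [huu]
          rw [Nat.choose_self]
          simp only [Nat.cast_one, div_one]
          simp only [hSg]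
          calc ∑ F ∈ Finset.powersetCard m E, (gFun F : ℝ)
              ≤ (Finset.powersetCard m E).card • ((n:ℝ)^2) :=
                Finset.sum_le_card_nsmul _ _ _ (fun F _ => hgE F)
            _ = (n:ℝ)^2 := by
                rw [Finset.card_powersetCard, ← hm, Nat.choose_self, one_smul]
        have h5 : 0 ≤ uu 0 := by
          rw [huu]
          exact div_nonneg (hSgnn 0) (by positivity)
        linarith
      have hC0 : (0:ℝ) ≤ 8/x^2 * Real.sqrt m / (2*c^2*(n:ℝ)^2) := by positivity
      have h6 : (8/x^2 * Real.sqrt m / (2*c^2*(n:ℝ)^2)) * (uu m - uu 0)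
          ≤ (8/x^2 * Real.sqrt m / (2*c^2*(n:ℝ)^2)) * ((n:ℝ)^2) :=
        mul_le_mul_of_nonneg_left h3 hC0
      have h7 : (8/x^2 * Real.sqrt m / (2*c^2*(n:ℝ)^2)) * ((n:ℝ)^2)
          = 4 * Real.sqrt m / (c^2 * x^2) := by
        field_simp
        ring
      linarith
    -- final chain
    have hEXnn : (0:ℝ) ≤ ∑ F ∈ E.powerset, (p ^ F.card * (1-p) ^ (m - F.card)) * (X F : ℝ) :=
      Finset.sum_nonneg fun F _ => by positivity
    have key1sum : (1-p) * ∑ e ∈ E, percProb G p {F | IsLBridge G c F e}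
        = ∑ F ∈ E.powerset, (p ^ F.card * (1-p) ^ (m - F.card)) * (X F : ℝ) := by
      rw [Finset.mul_sum, Finset.sum_congr rfl key1]
      exact key2
    have hSle : ∑ e ∈ E, percProb G p {F | IsLBridge G c F e}
        ≤ 4 * Real.sqrt m / (c^2 * x^3) := by
      have h1 : ∑ e ∈ E, percProb G p {F | IsLBridge G c F e}
          = (∑ F ∈ E.powerset, (p ^ F.card * (1-p) ^ (m - F.card)) * (X F : ℝ)) / (1-p) := by
        rw [eq_div_iff hq0.ne', mul_comm]
        exact key1sum
      rw [h1]
      calc (∑ F ∈ E.powerset, (p ^ F.card * (1-p) ^ (m - F.card)) * (X F : ℝ)) / (1-p)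
          ≤ (∑ F ∈ E.powerset, (p ^ F.card * (1-p) ^ (m - F.card)) * (X F : ℝ)) / x :=
            div_le_div_of_nonneg_left hEXnn hx hqx
        _ ≤ (4 * Real.sqrt m / (c^2 * x^2)) / x := by gcongr
        _ = 4 * Real.sqrt m / (c^2 * x^3) := by
            field_simp
    -- conclude
    have hsqm : Real.sqrt m * Real.sqrt m = (m:ℝ) := Real.mul_self_sqrt hm0'.le
    have hsm0 : 0 < Real.sqrt m := Real.sqrt_pos.mpr hm0'
    have hsn0 : 0 < Real.sqrt n := Real.sqrt_pos.mpr hn0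
    have hsn2m : Real.sqrt n ≤ Real.sqrt 2 * Real.sqrt m := by
      rw [← Real.sqrt_mul (by norm_num : (0:ℝ) ≤ 2) m]
      exact Real.sqrt_le_sqrt hn2m
    have hfinal1 : (1 / (m:ℝ)) * (4 * Real.sqrt m / (c^2 * x^3))
        = 4 / (c^2 * x^3 * Real.sqrt m) := by
      field_simp
      linear_combination hsqm
    have hfinal2 : 4 / (c^2 * x^3 * Real.sqrt m) ≤ 4 * Real.sqrt 2 / (c^2 * x^3) / Real.sqrt n := by
      rw [div_le_div_iff₀ (by positivity) hsn0]
      have h1 : 4 * Real.sqrt n ≤ 4 * (Real.sqrt 2 * Real.sqrt m) := by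
        have := hsn2m
        linarith
      calc 4 * Real.sqrt n ≤ 4 * (Real.sqrt 2 * Real.sqrt m) := h1
        _ ≤ 4 * Real.sqrt 2 / (c^2 * x^3) * (c^2 * x^3 * Real.sqrt m) := by
            rw [show 4 * Real.sqrt 2 / (c^2 * x^3) * (c^2 * x^3 * Real.sqrt m)
                = 4 * (Real.sqrt 2 * Real.sqrt m) * ((c^2*x^3) / (c^2*x^3)) by ring]
            rw [div_self (by positivity : (c^2*x^3 : ℝ) ≠ 0), mul_one]
      
    have hsum_nonneg : (0:ℝ) ≤ ∑ e ∈ E, percProb G p {F | IsLBridge G c F e} := by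
      have h1 : (1-p) * ∑ e ∈ E, percProb G p {F | IsLBridge G c F e} ≥ 0 := by
        rw [key1sum]; exact hEXnn
      nlinarith [h1, hq0]
    calc (1 / (m:ℝ)) * ∑ e ∈ E, percProb G p {F | IsLBridge G c F e}
        ≤ (1 / (m:ℝ)) * (4 * Real.sqrt m / (c^2 * x^3)) := by
          apply mul_le_mul_of_nonneg_left hSle
          positivity
      _ = 4 / (c^2 * x^3 * Real.sqrt m) := hfinal1
      _ ≤ 4 * Real.sqrt 2 / (c^2 * x^3) / Real.sqrt n := hfinal2
      _ ≤ (4 * Real.sqrt 2 / (c^2 * x^3) + 1) / Real.sqrt n := by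
          gcongr
          linarith


end
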